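/- Let r, α, β, γ, μ, τ, ω > 0 with ω > τ and γ(μα − β) > 0, let p, q ≥ 0, let z be real with 0 < |z| ≤ 1, and assume r² < 1. Then, for ν = 1, the (p,q)-Mathieu-type series with the sequence a_k = (k!)^γ satisfies S_{μ,1,τ,ω}^{(α,β)}(r; {(k!)^γ}; p,q; z) = (2zτ/ω) Σ_{m=0}^∞ ((μ)_m/m!) (−r²)^m E_{γ((μ+m)α−β), 1, 2; p,q}^{(1, τ+1, ω+1)}(z). -/

import Mathlib

open Real MeasureTheory Set Filter Topology

/-- Pochhammer symbol `(a)_n = Γ(a+n)/Γ(a)`. -/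
noncomputable def poch (a : ℝ) (n : ℕ) : ℝ := Real.Gamma (a + n) / Real.Gamma a

/-- Euler beta function. -/
noncomputable def betaE (x y : ℝ) : ℝ := Real.Gamma x * Real.Gamma y / Real.Gamma (x + y)

/-- Extended beta function `B_{p,q}(x,y)`. -/
noncomputable def betaPQ (p q x y : ℝ) : ℝ :=
  ∫ t in Ioo (0:ℝ) 1, t ^ (x - 1) * (1 - t) ^ (y - 1) * Real.exp (-p / t - q / (1 - t))

/-- The `(p,q)`-Mittag-Leffler function `E_{δ,θ,σ;p,q}^{(lam,τ,ω)}(z)`. -/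
noncomputable def mlPQ (δ θ σ lam τ ω p q z : ℝ) : ℝ :=
  ∑' k : ℕ, poch lam k * betaPQ p q (τ + (k : ℝ)) (ω - τ) * z ^ k /
    (Real.Gamma (θ * (k : ℝ) + σ) ^ δ * betaE τ (ω - τ) * (Nat.factorial k : ℝ))

/-- The `(p,q)`-Mathieu-type power series attached to the sequence `a`. -/
noncomputable def mathieuPQ (μ ν τ ω α β r p q z : ℝ) (a : ℕ → ℝ) : ℝ :=
  ∑' n : ℕ, 2 * a (n + 1) ^ β * poch ν (n + 1) *
      betaPQ p q (τ + ((n : ℝ) + 1)) (ω - τ) * z ^ (n + 1) /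
    ((Nat.factorial (n + 1) : ℝ) * betaE τ (ω - τ) * (a (n + 1) ^ α + r ^ 2) ^ μ)


lemma poch_pos {a : ℝ} (ha : 0 < a) (n : ℕ) : 0 < poch a n :=
  div_pos (Real.Gamma_pos_of_pos (by positivity)) (Real.Gamma_pos_of_pos ha)

lemma poch_succ {a : ℝ} (ha : 0 < a) (n : ℕ) : poch a (n + 1) = poch a n * (a + n) := by
  unfold poch
  rw [show a + ((n:ℕ)+1:ℕ) = (a + n) + 1 by push_cast; ring,
    Real.Gamma_add_one (by positivity)]
  ring

lemma poch_one (n : ℕ) : poch 1 n = n.factorial := by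
  unfold poch
  rw [show (1:ℝ) + n = (n:ℝ) + 1 by ring, Real.Gamma_nat_eq_factorial, Real.Gamma_one, div_one]

lemma tendsto_ratio (a : ℝ) : Tendsto (fun m : ℕ => (a + m) / (1 + m)) atTop (𝓝 1) := by
  have h0 : Tendsto (fun m : ℕ => (a - 1) / (1 + m)) atTop (𝓝 0) := by
    apply Tendsto.div_atTop tendsto_const_nhds
    exact tendsto_atTop_add_const_left _ 1 tendsto_natCast_atTop_atTop
  have : (fun m : ℕ => (a + m) / (1 + m)) = fun m : ℕ => (a - 1) / (1 + m) + 1 := by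
    funext m
    have : (1:ℝ) + m ≠ 0 := by positivity
    field_simp
    ring
  rw [this]
  simpa using h0.add tendsto_const_nhds

lemma summable_poch {a u : ℝ} (ha : 0 < a) (hu0 : 0 < u) (hu : u < 1) :
    Summable (fun m : ℕ => poch a m / m.factorial * u ^ m) := by
  apply summable_of_ratio_test_tendsto_lt_one hu (Eventually.of_forall (fun m => ?_))
  · have key : ∀ m : ℕ, ‖poch a (m+1) / (m+1).factorial * u ^ (m+1)‖ /
        ‖poch a m / m.factorial * u ^ m‖ = (a + m) / (1 + m) * u := by
      intro m
      have h1 : (0:ℝ) < poch a m / m.factorial * u ^ m := by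
        have := poch_pos ha m
        positivity
      have h2 : (0:ℝ) < poch a (m+1) / (m+1).factorial * u ^ (m+1) := by
        have := poch_pos ha (m+1)
        positivity
      rw [Real.norm_of_nonneg h2.le, Real.norm_of_nonneg h1.le, poch_succ ha,
        Nat.factorial_succ, pow_succ]
      have hpm := (poch_pos ha m).ne'
      have hfm : ((m.factorial : ℝ)) ≠ 0 := Nat.cast_ne_zero.2 m.factorial_ne_zero
      have hum : u ^ m ≠ 0 := pow_ne_zero _ hu0.ne'
      field_simp
      push_cast
      ring
    simp_rw [key]
    simpa using (tendsto_ratio a).mul tendsto_const_nhds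
  · have := poch_pos ha m
    positivity

lemma integrableOn_rpow_exp {s b : ℝ} (hs : 0 < s) (hb : 0 < b) :
    IntegrableOn (fun t : ℝ => t ^ (s - 1) * Real.exp (-(b * t))) (Ioi 0) := by
  have := integrableOn_rpow_mul_exp_neg_mul_rpow (s := s - 1) (p := 1) (b := b)
    (by linarith) one_pos hb
  refine this.congr_fun (fun t ht => ?_) measurableSet_Ioi
  beta_reduce
  rw [Real.rpow_one, neg_mul]

lemma hasSum_binom {μ x u : ℝ} (hμ : 0 < μ) (hx : 0 < x) (hu0 : 0 < u) (hux : u < x) :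
    HasSum (fun m : ℕ => poch μ m / m.factorial * (-u) ^ m * x ^ (-μ - m))
      ((x + u) ^ (-μ)) := by
  -- F m t = (-u)^m/m! * (t^(μ+m-1) * exp(-(x*t)))
  set F : ℕ → ℝ → ℝ := fun m t => ((-u) ^ m / m.factorial) * (t ^ (μ + m - 1) * Real.exp (-(x * t))) with hF
  have hFint : ∀ m : ℕ, Integrable (F m) (volume.restrict (Ioi 0)) := by
    intro m
    exact (integrableOn_rpow_exp (by positivity : (0:ℝ) < μ + m) hx).const_mul _
  have hnorm : ∀ m : ℕ, ∫ t in Ioi 0, ‖F m t‖ =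
      (u ^ m / m.factorial) * ((1 / x) ^ (μ + (m:ℝ)) * Real.Gamma (μ + m)) := by
    intro m
    rw [← Real.integral_rpow_mul_exp_neg_mul_Ioi (by positivity : (0:ℝ) < μ + m) hx,
      ← integral_const_mul]
    refine setIntegral_congr_fun measurableSet_Ioi (fun t ht => ?_)
    rw [mem_Ioi] at ht
    have h1 : (0:ℝ) ≤ t ^ (μ + (m:ℝ) - 1) := Real.rpow_nonneg ht.le _
    have : ‖F m t‖ = |(-u) ^ m / m.factorial| * (t ^ (μ + (m:ℝ) - 1) * Real.exp (-(x * t))) := by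
      rw [hF]
      simp only [norm_mul, Real.norm_eq_abs]
      rw [abs_of_nonneg h1, abs_of_nonneg (Real.exp_pos _).le]
    rw [this, abs_div, abs_pow, abs_neg, abs_of_nonneg hu0.le, Nat.abs_cast]
  have hsum : Summable fun m : ℕ => ∫ t in Ioi 0, ‖F m t‖ := by
    simp_rw [hnorm]
    have hx' : (0:ℝ) < 1 / x := by positivity
    have : ∀ m : ℕ, u ^ m / m.factorial * ((1 / x) ^ (μ + (m:ℝ)) * Real.Gamma (μ + m)) =
        ((1/x) ^ μ * Real.Gamma μ) * (poch μ m / m.factorial * (u / x) ^ m) := by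
      intro m
      rw [Real.rpow_add hx', Real.rpow_natCast, poch]
      have hΓ : Real.Gamma μ ≠ 0 := (Real.Gamma_pos_of_pos hμ).ne'
      have hfm : ((m.factorial : ℝ)) ≠ 0 := Nat.cast_ne_zero.2 m.factorial_ne_zero
      field_simp
      ring
    simp_rw [this]
    exact ((summable_poch hμ (by positivity) (by rw [div_lt_one hx]; exact hux)).mul_left _)
  have key := MeasureTheory.hasSum_integral_of_summable_integral_norm hFint hsum
  -- identify the integral of the tsum
  have htsum : ∫ t in Ioi 0, (∑' m, F m t) = (1 / (x + u)) ^ μ * Real.Gamma μ := by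
    rw [← Real.integral_rpow_mul_exp_neg_mul_Ioi hμ (by positivity : (0:ℝ) < x + u)]
    refine setIntegral_congr_fun measurableSet_Ioi (fun t ht => ?_)
    rw [mem_Ioi] at ht
    have h1 : ∀ m : ℕ, F m t = (t ^ (μ - 1) * Real.exp (-(x * t))) * ((-(u * t)) ^ m / m.factorial) := by
      intro m
      rw [hF]
      simp only
      rw [show μ + (m:ℝ) - 1 = (μ - 1) + m by ring, Real.rpow_add ht, Real.rpow_natCast,
        show -(u * t) = (-u) * t by ring, mul_pow]
      ring
    simp_rw [h1]
    rw [tsum_mul_left]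
    have : ∑' m : ℕ, (-(u * t)) ^ m / (m.factorial : ℝ) = Real.exp (-(u * t)) := by
      rw [Real.exp_eq_exp_ℝ, NormedSpace.exp_eq_tsum_div]
    rw [this, mul_assoc, ← Real.exp_add, show -(x * t) + -(u * t) = -((x + u) * t) by ring]
  rw [htsum] at key
  -- identify each integral
  have hint : ∀ m : ℕ, ∫ t in Ioi 0, F m t =
      ((1/x) ^ μ * Real.Gamma μ) * (poch μ m / m.factorial * (-u) ^ m * (1/x) ^ (m:ℝ)) := by
    intro m
    rw [hF]
    simp only
    rw [MeasureTheory.integral_const_mul,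
      Real.integral_rpow_mul_exp_neg_mul_Ioi (by positivity : (0:ℝ) < μ + m) hx,
      Real.rpow_add (by positivity : (0:ℝ) < 1/x), poch]
    have : Real.Gamma μ ≠ 0 := (Real.Gamma_pos_of_pos hμ).ne'
    field_simp
  have key2 : HasSum (fun m : ℕ => ((1/x) ^ μ * Real.Gamma μ) *
      (poch μ m / m.factorial * (-u) ^ m * (1/x) ^ (m:ℝ)))
      ((1 / (x + u)) ^ μ * Real.Gamma μ) := by
    exact HasSum.congr_fun key (fun m => (hint m).symm)
  have hΓ : Real.Gamma μ ≠ 0 := (Real.Gamma_pos_of_pos hμ).ne'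
  have key3 := key2.div_const (Real.Gamma μ)
  have hpw : ∀ m : ℕ, (1/x:ℝ) ^ μ * (1/x:ℝ) ^ (m:ℝ) = x ^ (-μ - (m:ℝ)) := by
    intro m
    rw [← Real.rpow_add (by positivity : (0:ℝ) < 1/x), one_div, Real.inv_rpow hx.le,
      ← Real.rpow_neg hx.le, neg_add, ← sub_eq_add_neg]
  have heq : ∀ m : ℕ, poch μ m / m.factorial * (-u) ^ m * x ^ (-μ - (m:ℝ)) =
      (1/x:ℝ) ^ μ * Real.Gamma μ * (poch μ m / m.factorial * (-u) ^ m * (1/x:ℝ) ^ (m:ℝ)) /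
        Real.Gamma μ := by
    intro m
    rw [← hpw m]
    field_simp
  have hval : (1 / (x + u) : ℝ) ^ μ * Real.Gamma μ / Real.Gamma μ = (x + u) ^ (-μ) := by
    rw [mul_div_assoc, div_self hΓ, mul_one, one_div, Real.inv_rpow (by positivity : (0:ℝ) ≤ x + u),
      ← Real.rpow_neg (by positivity : (0:ℝ) ≤ x + u)]
  rw [hval] at key3
  exact HasSum.congr_fun key3 heq

lemma betaE_pos {x y : ℝ} (hx : 0 < x) (hy : 0 < y) : 0 < betaE x y :=
  div_pos (mul_pos (Real.Gamma_pos_of_pos hx) (Real.Gamma_pos_of_pos hy))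
    (Real.Gamma_pos_of_pos (by positivity))

lemma integrableOn_betaFn {x y : ℝ} (hx : 0 < x) (hy : 0 < y) :
    IntegrableOn (fun t : ℝ => t ^ (x - 1) * (1 - t) ^ (y - 1)) (Ioo 0 1) := by
  have h := (Complex.betaIntegral_convergent (u := (x:ℂ)) (v := (y:ℂ))
    (by simpa using hx) (by simpa using hy)).1
  have h2 : IntegrableOn (fun a : ℝ => ‖(a:ℂ) ^ ((x:ℂ) - 1) * (1 - (a:ℂ)) ^ ((y:ℂ) - 1)‖) (Ioo 0 1) :=
    IntegrableOn.mono_set h.norm Ioo_subset_Ioc_self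
  refine h2.congr_fun (fun t ht => ?_) measurableSet_Ioo
  obtain ⟨ht0, ht1⟩ := ht
  beta_reduce
  rw [norm_mul]
  rw [show ((x:ℂ) - 1) = ((x - 1 : ℝ) : ℂ) by push_cast; ring,
    show ((y:ℂ) - 1) = ((y - 1 : ℝ) : ℂ) by push_cast; ring,
    show (1 - (t:ℂ)) = ((1 - t : ℝ) : ℂ) by push_cast; ring]
  rw [Complex.norm_cpow_eq_rpow_re_of_pos ht0, Complex.norm_cpow_eq_rpow_re_of_pos (by linarith)]
  simp

lemma betaPQ_cont {p q x y : ℝ} :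
    ContinuousOn (fun t : ℝ => t ^ (x - 1) * (1 - t) ^ (y - 1) * Real.exp (-p / t - q / (1 - t)))
      (Ioo 0 1) := by
  intro t ht
  obtain ⟨ht0, ht1⟩ := ht
  apply ContinuousAt.continuousWithinAt
  have h1 : ContinuousAt (fun t : ℝ => t ^ (x - 1)) t :=
    Real.continuousAt_rpow_const t _ (Or.inl ht0.ne')
  have h2 : ContinuousAt (fun t : ℝ => (1 - t) ^ (y - 1)) t :=
    (Real.continuousAt_rpow_const (1 - t) _ (Or.inl (by linarith))).comp
      ((continuous_const.sub continuous_id).continuousAt)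
  have h3 : ContinuousAt (fun t : ℝ => Real.exp (-p / t - q / (1 - t))) t := by
    apply Real.continuous_exp.continuousAt.comp
    apply ContinuousAt.sub
    · exact continuousAt_const.div continuousAt_id ht0.ne'
    · exact continuousAt_const.div ((continuous_const.sub continuous_id).continuousAt)
        (sub_ne_zero.2 (by linarith))
  exact (h1.mul h2).mul h3

lemma integrableOn_betaPQFn {p q x y : ℝ} (hp : 0 ≤ p) (hq : 0 ≤ q) (hx : 0 < x) (hy : 0 < y) :
    IntegrableOn (fun t : ℝ => t ^ (x - 1) * (1 - t) ^ (y - 1) * Real.exp (-p / t - q / (1 - t)))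
      (Ioo 0 1) := by
  apply Integrable.mono' (integrableOn_betaFn hx hy)
    (betaPQ_cont.aestronglyMeasurable measurableSet_Ioo)
  rw [ae_restrict_iff' measurableSet_Ioo]
  refine Eventually.of_forall (fun t ht => ?_)
  obtain ⟨ht0, ht1⟩ := ht
  have e1 : (0:ℝ) ≤ t ^ (x - 1) := Real.rpow_nonneg ht0.le _
  have e2 : (0:ℝ) ≤ (1 - t) ^ (y - 1) := Real.rpow_nonneg (by linarith) _
  have e3 : Real.exp (-p / t - q / (1 - t)) ≤ 1 := by
    rw [Real.exp_le_one_iff]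
    have : 0 ≤ p / t := div_nonneg hp ht0.le
    have : 0 ≤ q / (1 - t) := div_nonneg hq (by linarith)
    simp only [neg_div]
    linarith
  rw [Real.norm_eq_abs, abs_of_nonneg (by positivity)]
  calc t ^ (x - 1) * (1 - t) ^ (y - 1) * Real.exp (-p / t - q / (1 - t))
      ≤ t ^ (x - 1) * (1 - t) ^ (y - 1) * 1 := by
        apply mul_le_mul_of_nonneg_left e3 (by positivity)
    _ = t ^ (x - 1) * (1 - t) ^ (y - 1) := by ring

lemma betaPQ_nonneg (p q x y : ℝ) : 0 ≤ betaPQ p q x y := by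
  apply setIntegral_nonneg measurableSet_Ioo
  intro t ht
  obtain ⟨ht0, ht1⟩ := ht
  have e1 : (0:ℝ) ≤ t ^ (x - 1) := Real.rpow_nonneg ht0.le _
  have e2 : (0:ℝ) ≤ (1 - t) ^ (y - 1) := Real.rpow_nonneg (by linarith) _
  positivity

lemma betaPQ_le {p q x τ y : ℝ} (hp : 0 ≤ p) (hq : 0 ≤ q) (hτ : 0 < τ) (hτx : τ ≤ x)
    (hy : 0 < y) :
    betaPQ p q x y ≤ ∫ t in Ioo (0:ℝ) 1, t ^ (τ - 1) * (1 - t) ^ (y - 1) := by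
  apply setIntegral_mono_on (integrableOn_betaPQFn hp hq (lt_of_lt_of_le hτ hτx) hy)
    (integrableOn_betaFn hτ hy) measurableSet_Ioo
  intro t ht
  obtain ⟨ht0, ht1⟩ := ht
  have e2 : (0:ℝ) ≤ (1 - t) ^ (y - 1) := Real.rpow_nonneg (by linarith) _
  have e3 : Real.exp (-p / t - q / (1 - t)) ≤ 1 := by
    rw [Real.exp_le_one_iff]
    have : 0 ≤ p / t := div_nonneg hp ht0.le
    have : 0 ≤ q / (1 - t) := div_nonneg hq (by linarith)
    simp only [neg_div]
    linarith
  have e4 : t ^ (x - 1) ≤ t ^ (τ - 1) :=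
    Real.rpow_le_rpow_of_exponent_ge ht0 ht1.le (by linarith)
  calc t ^ (x - 1) * (1 - t) ^ (y - 1) * Real.exp (-p / t - q / (1 - t))
      ≤ t ^ (x - 1) * (1 - t) ^ (y - 1) * 1 := by
        apply mul_le_mul_of_nonneg_left e3 (by positivity)
    _ = t ^ (x - 1) * (1 - t) ^ (y - 1) := by ring
    _ ≤ t ^ (τ - 1) * (1 - t) ^ (y - 1) := by
        apply mul_le_mul_of_nonneg_right e4 e2

lemma summable_fact {c w : ℝ} (hc : 0 < c) (hw0 : 0 < w) (hw : w ≤ 1) :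
    Summable (fun n : ℕ => w ^ (n + 1) * ((n + 1).factorial : ℝ) ^ (-c)) := by
  apply summable_of_ratio_test_tendsto_lt_one (l := 0) one_pos
    (Eventually.of_forall (fun n => ?_))
  · have key : ∀ n : ℕ, ‖w ^ (n + 2) * ((n + 2).factorial : ℝ) ^ (-c)‖ /
        ‖w ^ (n + 1) * ((n + 1).factorial : ℝ) ^ (-c)‖ = w * ((n : ℝ) + 2) ^ (-c) := by
      intro n
      have hf1 : (0:ℝ) < ((n + 1).factorial : ℝ) := by positivity
      have h1 : (0:ℝ) < w ^ (n + 1) * ((n + 1).factorial : ℝ) ^ (-c) := by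
        have := Real.rpow_pos_of_pos hf1 (-c)
        positivity
      have h2 : (0:ℝ) < w ^ (n + 2) * ((n + 2).factorial : ℝ) ^ (-c) := by
        have : (0:ℝ) < ((n + 2).factorial : ℝ) := by positivity
        have := Real.rpow_pos_of_pos this (-c)
        positivity
      rw [Real.norm_of_nonneg h2.le, Real.norm_of_nonneg h1.le]
      have hfact : ((n + 2).factorial : ℝ) = ((n:ℝ) + 2) * ((n + 1).factorial : ℝ) := by
        rw [show n + 2 = (n + 1) + 1 by ring, Nat.factorial_succ]
        push_cast; ring
      rw [hfact, Real.mul_rpow (by positivity) hf1.le, pow_succ w (n + 1)]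
      have hr1 : ((n + 1).factorial : ℝ) ^ (-c) ≠ 0 := (Real.rpow_pos_of_pos hf1 _).ne'
      have hw' : w ^ (n + 1) ≠ 0 := pow_ne_zero _ hw0.ne'
      field_simp
    simp only [show ∀ n : ℕ, n + 1 + 1 = n + 2 from fun n => rfl]
    simp_rw [key]
    rw [show (0:ℝ) = w * 0 by ring]
    apply Tendsto.const_mul
    have h0 : Tendsto (fun n : ℕ => ((n : ℝ) + 2)) atTop atTop :=
      tendsto_atTop_add_const_right _ 2 tendsto_natCast_atTop_atTop
    exact (tendsto_rpow_neg_atTop hc).comp h0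
  · have hf1 : (0:ℝ) < ((n + 1).factorial : ℝ) := by positivity
    have := Real.rpow_pos_of_pos hf1 (-c)
    positivity

theorem statement15 (r α β γ μ τ ω p q z : ℝ)
    (hr : 0 < r) (hα : 0 < α) (hβ : 0 < β) (hγ : 0 < γ) (hμ : 0 < μ)
    (hτ : 0 < τ) (hω : 0 < ω) (hτω : τ < ω)
    (hexp : 0 < γ * (μ * α - β)) (hp : 0 ≤ p) (hq : 0 ≤ q)
    (hz0 : 0 < |z|) (hz : |z| ≤ 1) (hr1 : r ^ 2 < 1) :
    mathieuPQ μ 1 τ ω α β r p q z (fun k => ((Nat.factorial k : ℝ)) ^ γ) =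
      2 * z * τ / ω *
        ∑' m : ℕ, poch μ m / (Nat.factorial m : ℝ) * (-r ^ 2) ^ m *
          mlPQ (γ * ((μ + (m : ℝ)) * α - β)) 1 2 1 (τ + 1) (ω + 1) p q z := by
  have hτω' : (0:ℝ) < ω - τ := by linarith
  set B : ℝ := betaE τ (ω - τ) with hBdef
  have hB : 0 < B := betaE_pos hτ hτω'
  set F : ℕ → ℝ := fun n => ((n + 1).factorial : ℝ) with hFdef
  have hF0 : ∀ n, (0:ℝ) < F n := fun n => by positivity
  have hF1 : ∀ n, (1:ℝ) ≤ F n := fun n => by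
    simp only [hFdef]
    exact_mod_cast Nat.one_le_iff_ne_zero.2 (n+1).factorial_ne_zero
  set X : ℕ → ℝ := fun n => F n ^ (γ * α) with hXdef
  have hX1 : ∀ n, (1:ℝ) ≤ X n := fun n =>
    Real.one_le_rpow (hF1 n) (by positivity)
  have hr2 : (0:ℝ) < r ^ 2 := by positivity
  have hrX : ∀ n, r ^ 2 < X n := fun n => lt_of_lt_of_le hr1 (hX1 n)
  set A : ℕ → ℝ := fun n => 2 * (F n ^ γ) ^ β * poch 1 (n + 1) *
      betaPQ p q (τ + ((n : ℝ) + 1)) (ω - τ) * z ^ (n + 1) / (F n * B) with hAdef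
  set P : ℕ → ℝ := fun m => poch μ m / m.factorial * (-r ^ 2) ^ m with hPdef
  set g : ℕ → ℕ → ℝ := fun n m => A n * (P m * X n ^ (-μ - (m : ℝ))) with hgdef
  -- Step 2 : each term has the binomial expansion
  have hbin : ∀ n : ℕ, HasSum (fun m => g n m) (A n * (X n + r ^ 2) ^ (-μ)) := by
    intro n
    have h := (hasSum_binom hμ (lt_of_lt_of_le one_pos (hX1 n)) hr2 (hrX n)).mul_left (A n)
    exact h.congr_fun (fun m => by simp only [hgdef, hPdef])
  -- Step 1 : rewrite mathieuPQ terms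
  have hstep1 : mathieuPQ μ 1 τ ω α β r p q z (fun k => ((Nat.factorial k : ℝ)) ^ γ) =
      ∑' n : ℕ, A n * (X n + r ^ 2) ^ (-μ) := by
    rw [mathieuPQ]
    refine tsum_congr (fun n => ?_)
    simp only [hAdef, hXdef, hFdef]
    rw [← Real.rpow_mul (by positivity : (0:ℝ) ≤ ((n+1).factorial : ℝ)) γ α]
    rw [Real.rpow_neg (by positivity) μ, div_mul_eq_div_div, div_eq_mul_inv]
  rw [hstep1]
  have hstep2 : ∑' n : ℕ, A n * (X n + r ^ 2) ^ (-μ) = ∑' n : ℕ, ∑' m : ℕ, g n m :=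
    tsum_congr (fun n => ((hbin n).tsum_eq).symm)
  rw [hstep2]
  -- Step 3 : summability of the double series
  set B0 : ℝ := ∫ t in Ioo (0:ℝ) 1, t ^ (τ - 1) * (1 - t) ^ (ω - τ - 1) with hB0def
  have hB0 : 0 ≤ B0 := by
    apply setIntegral_nonneg measurableSet_Ioo
    intro t ht
    have := Real.rpow_nonneg ht.1.le (τ - 1)
    have := Real.rpow_nonneg (by linarith [ht.2] : (0:ℝ) ≤ 1 - t) (ω - τ - 1)
    positivity
  set cc : ℝ := γ * (μ * α - β) with hccdef
  have hsummable : Summable (Function.uncurry g) := by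
    apply Summable.of_norm_bounded
      (g := fun nm : ℕ × ℕ => (2 * B0 / B) *
        ((|z| ^ (nm.1 + 1) * F nm.1 ^ (-cc)) * (poch μ nm.2 / (nm.2).factorial * (r ^ 2) ^ nm.2)))
    · apply Summable.mul_left
      apply Summable.mul_of_nonneg (summable_fact hexp hz0 hz) (summable_poch hμ hr2 hr1)
      · intro n
        have := Real.rpow_pos_of_pos (hF0 n) (-cc)
        positivity
      · intro m
        have := poch_pos hμ m
        positivity
    · rintro ⟨n, m⟩
      simp only [Function.uncurry_apply_pair]
      rw [Real.norm_eq_abs, hgdef]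
      simp only
      have hpoch := poch_pos hμ m
      have hXpow : (0:ℝ) < X n ^ (-μ - (m:ℝ)) :=
        Real.rpow_pos_of_pos (lt_of_lt_of_le one_pos (hX1 n)) _
      have habsP : |P m| = poch μ m / m.factorial * (r ^ 2) ^ m := by
        simp only [hPdef]
        rw [abs_mul, abs_pow, abs_neg, abs_of_nonneg hr2.le,
          abs_of_nonneg (by positivity : (0:ℝ) ≤ poch μ m / m.factorial)]
      have hpoch1 : poch 1 (n + 1) = F n := poch_one (n + 1)
      have habsA : |A n| = 2 * (F n ^ γ) ^ β * F n * betaPQ p q (τ + ((n:ℝ) + 1)) (ω - τ) *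
          |z| ^ (n + 1) / (F n * B) := by
        simp only [hAdef]
        rw [abs_div, abs_of_nonneg (by positivity : (0:ℝ) ≤ F n * B)]
        rw [abs_mul, abs_pow]
        have h1 : (0:ℝ) ≤ (F n ^ γ) ^ β := Real.rpow_nonneg (Real.rpow_nonneg (hF0 n).le _) _
        have h2 := betaPQ_nonneg p q (τ + ((n:ℝ) + 1)) (ω - τ)
        rw [abs_of_nonneg (by
          have := poch_pos one_pos (n+1)
          positivity : (0:ℝ) ≤ 2 * (F n ^ γ) ^ β * poch 1 (n + 1) *
            betaPQ p q (τ + ((n:ℝ) + 1)) (ω - τ)), hpoch1]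
      rw [abs_mul, abs_mul, habsA, habsP, abs_of_nonneg hXpow.le]
      -- now the bound
      have hbeta : betaPQ p q (τ + ((n:ℝ) + 1)) (ω - τ) ≤ B0 :=
        betaPQ_le hp hq hτ (by have := Nat.cast_nonneg (α := ℝ) n; linarith) hτω'
      have hFexp : (F n ^ γ) ^ β * X n ^ (-μ - (m:ℝ)) ≤ F n ^ (-cc) := by
        rw [hXdef]
        rw [← Real.rpow_mul (hF0 n).le γ β, ← Real.rpow_mul (hF0 n).le (γ * α),
          ← Real.rpow_add (hF0 n)]
        apply Real.rpow_le_rpow_of_exponent_le (hF1 n)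
        have hm : (0:ℝ) ≤ (m:ℝ) := Nat.cast_nonneg m
        simp only [hccdef]
        nlinarith [mul_nonneg (mul_nonneg hγ.le hα.le) hm]
      have e1 : (0:ℝ) ≤ betaPQ p q (τ + ((n:ℝ) + 1)) (ω - τ) := betaPQ_nonneg _ _ _ _
      calc 2 * (F n ^ γ) ^ β * F n * betaPQ p q (τ + ((n:ℝ) + 1)) (ω - τ) * |z| ^ (n + 1) /
            (F n * B) * (poch μ m / m.factorial * (r ^ 2) ^ m * X n ^ (-μ - (m:ℝ)))
          = (2 / B) * (betaPQ p q (τ + ((n:ℝ) + 1)) (ω - τ) * |z| ^ (n + 1)) *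
            ((F n ^ γ) ^ β * X n ^ (-μ - (m:ℝ))) * (poch μ m / m.factorial * (r ^ 2) ^ m) := by
            have := (hF0 n).ne'
            field_simp
        _ ≤ (2 / B) * (B0 * |z| ^ (n + 1)) * (F n ^ (-cc)) *
              (poch μ m / m.factorial * (r ^ 2) ^ m) := by
            apply mul_le_mul_of_nonneg_right _ (by positivity)
            apply mul_le_mul
            · apply mul_le_mul_of_nonneg_left _ (by positivity)
              apply mul_le_mul_of_nonneg_right hbeta (by positivity)
            · exact hFexp
            · positivity
            · positivity
        _ = 2 * B0 / B * (|z| ^ (n + 1) * F n ^ (-cc) *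
              (poch μ m / m.factorial * (r ^ 2) ^ m)) := by ring
  -- Step 4 : swap the order of summation
  rw [← Summable.tsum_comm hsummable]
  -- Step 5 : identify the inner sums
  have hbetaE1 : betaE (τ + 1) (ω + 1 - (τ + 1)) = τ / ω * B := by
    simp only [hBdef, betaE]
    rw [show ω + 1 - (τ + 1) = ω - τ by ring, Real.Gamma_add_one hτ.ne',
      show τ + 1 + (ω - τ) = ω + 1 by ring, Real.Gamma_add_one hω.ne',
      show τ + (ω - τ) = ω by ring]
    have h1 : Real.Gamma ω ≠ 0 := (Real.Gamma_pos_of_pos hω).ne'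
    field_simp
  have hinner : ∀ m : ℕ, ∑' n : ℕ, g n m =
      2 * z * τ / ω * (P m * mlPQ (γ * ((μ + (m : ℝ)) * α - β)) 1 2 1 (τ + 1) (ω + 1) p q z) := by
    intro m
    rw [mlPQ]
    rw [← tsum_mul_left, ← tsum_mul_left]
    refine tsum_congr (fun n => ?_)
    set δ : ℝ := γ * ((μ + (m : ℝ)) * α - β) with hδdef
    have hΓ2 : Real.Gamma (1 * (n:ℝ) + 2) = F n := by
      rw [show 1 * (n:ℝ) + 2 = ((n + 1 : ℕ) : ℝ) + 1 by push_cast; ring,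
        Real.Gamma_nat_eq_factorial]
    have hpoch1n : poch 1 n = (n.factorial : ℝ) := poch_one n
    have hFpow : (F n ^ γ) ^ β * X n ^ (-μ - (m:ℝ)) = (F n ^ δ)⁻¹ := by
      rw [hXdef, ← Real.rpow_mul (hF0 n).le γ β, ← Real.rpow_mul (hF0 n).le (γ * α),
        ← Real.rpow_add (hF0 n), ← Real.rpow_neg (hF0 n).le]
      congr 1
      simp only [hδdef]
      ring
    have hzpow : z ^ (n + 1) = z ^ n * z := pow_succ z n
    have hbarg : τ + 1 + (n:ℝ) = τ + ((n:ℝ) + 1) := by ring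
    -- expand everything
    simp only [hgdef, hAdef, hΓ2, hpoch1n, hbetaE1, hbarg, poch_one]
    rw [hzpow]
    have hFne : F n ≠ 0 := (hF0 n).ne'
    have hFδ : (0:ℝ) < F n ^ δ := Real.rpow_pos_of_pos (hF0 n) δ
    have hfn : ((n.factorial : ℝ)) ≠ 0 := Nat.cast_ne_zero.2 n.factorial_ne_zero
    have hfn1 : (((n+1).factorial : ℝ)) ≠ 0 := Nat.cast_ne_zero.2 (n+1).factorial_ne_zero
    rw [show ((n+1).factorial : ℝ) = F n from rfl]
    have hE2 : X n ^ (-μ - (m:ℝ)) ≠ 0 :=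
      (Real.rpow_pos_of_pos (lt_of_lt_of_le one_pos (hX1 n)) _).ne'
    have hE1 : (F n ^ γ) ^ β = (F n ^ δ)⁻¹ * (X n ^ (-μ - (m:ℝ)))⁻¹ := by
      rw [← hFpow]
      field_simp
    rw [hE1]
    field_simp
    ring
  calc ∑' m : ℕ, ∑' n : ℕ, g n m
      = ∑' m : ℕ, 2 * z * τ / ω *
          (P m * mlPQ (γ * ((μ + (m : ℝ)) * α - β)) 1 2 1 (τ + 1) (ω + 1) p q z) :=
        tsum_congr hinner
    _ = 2 * z * τ / ω * ∑' m : ℕ,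
          P m * mlPQ (γ * ((μ + (m : ℝ)) * α - β)) 1 2 1 (τ + 1) (ω + 1) p q z :=
        tsum_mul_left
    _ = 2 * z * τ / ω *
        ∑' m : ℕ, poch μ m / (Nat.factorial m : ℝ) * (-r ^ 2) ^ m *
          mlPQ (γ * ((μ + (m : ℝ)) * α - β)) 1 2 1 (τ + 1) (ω + 1) p q z := by
        simp only [hPdef]
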